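/- arXiv:1512.00707 — 7 statements merged into one kernel-verified Lean document; each statement's English description precedes it below -/
import Mathlib

section
/- Let A, B, C, Δ be real with Δ < 0 and C − A > 0, and set Z_U(ℰ) = (Bℰ+Δ)/(2·(C−A)), ℰ_{1U} = Δ/(2(A−C) − B), ℰ_{2U} = Δ/(2(C−A) − B). Then for ℰ > 0: (i) if 2(A−C) < B ≤ 2(C−A), one has −ℰ < Z_U(ℰ) < ℰ if and only if ℰ > ℰ_{1U}; (ii) if B > 2(C−A), one has −ℰ < Z_U(ℰ) < ℰ if and only if ℰ_{1U} < ℰ < ℰ_{2U}; (iii) if B ≤ 2(A−C), there is no ℰ > 0 with −ℰ < Z_U(ℰ) < ℰ. -/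
/-- Existence range of the inclined family: for Δ < 0 and C − A > 0, the condition
−ℰ < Z_U(ℰ) < ℰ holds iff ℰ > ℰ_{1U} (when 2(A−C) < B ≤ 2(C−A)), iff
ℰ_{1U} < ℰ < ℰ_{2U} (when B > 2(C−A)), and never (when B ≤ 2(A−C)). -/
theorem inclined_existence_thresholds (A B C Δ : ℝ) (hΔ : Δ < 0) (hCA : 0 < C - A) :
    let ZU : ℝ → ℝ := fun E => (B * E + Δ) / (2 * (C - A))
    let E1U := Δ / (2 * (A - C) - B)
    let E2U := Δ / (2 * (C - A) - B)
    (2 * (A - C) < B ∧ B ≤ 2 * (C - A) →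
      ∀ E : ℝ, 0 < E → ((-E < ZU E ∧ ZU E < E) ↔ E1U < E))
    ∧ (2 * (C - A) < B →
      ∀ E : ℝ, 0 < E → ((-E < ZU E ∧ ZU E < E) ↔ E1U < E ∧ E < E2U))
    ∧ (B ≤ 2 * (A - C) →
      ∀ E : ℝ, 0 < E → ¬(-E < ZU E ∧ ZU E < E)) := by
  intro ZU E1U E2U
  have h2 : (0:ℝ) < 2 * (C - A) := by linarith
  have hZlt : ∀ E : ℝ, ZU E < E ↔ B * E + Δ < E * (2 * (C - A)) := by
    intro E; simp only [ZU]; exact div_lt_iff₀ h2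
  have hltZ : ∀ E : ℝ, -E < ZU E ↔ (-E) * (2 * (C - A)) < B * E + Δ := by
    intro E; simp only [ZU]; exact lt_div_iff₀ h2
  refine ⟨?_, ?_, ?_⟩
  · rintro ⟨h1, h2'⟩ E hE
    have hd : 2 * (A - C) - B < 0 := by linarith
    have hE1 : E1U < E ↔ Δ > E * (2 * (A - C) - B) := by
      simp only [E1U]; exact div_lt_iff_of_neg hd
    rw [hZlt, hltZ, hE1]
    constructor
    · rintro ⟨ha, _⟩; nlinarith
    · intro h
      constructor
      · nlinarith
      · nlinarith
  · intro hB E hE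
    have hd : 2 * (A - C) - B < 0 := by linarith
    have hd2 : 2 * (C - A) - B < 0 := by linarith
    have hE1 : E1U < E ↔ Δ > E * (2 * (A - C) - B) := by
      simp only [E1U]; exact div_lt_iff_of_neg hd
    have hE2 : E < E2U ↔ E * (2 * (C - A) - B) > Δ := by
      simp only [E2U]; exact lt_div_iff_of_neg hd2
    rw [hZlt, hltZ, hE1, hE2]
    constructor
    · rintro ⟨ha, hb⟩; constructor <;> nlinarith
    · rintro ⟨ha, hb⟩; constructor <;> nlinarith
  · intro hB E hE
    rintro ⟨ha, _⟩
    rw [hltZ] at ha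
    nlinarith
end

section
/- Let A, B, C, Δ be real with Δ < 0 and A + C ≠ 0, and set Z_L(ℰ) = −(Bℰ+Δ)/(2·(A+C)), ℰ_{1L} = Δ/(2(A+C) − B), ℰ_{2L} = Δ/(−2(A+C) − B). Then for ℰ > 0: (a) if A + C < 0: (i) when 2(A+C) < B ≤ −2(A+C), one has −ℰ < Z_L(ℰ) < ℰ if and only if ℰ > ℰ_{1L}; (ii) when B > −2(A+C), one has −ℰ < Z_L(ℰ) < ℰ if and only if ℰ_{1L} < ℰ < ℰ_{2L}; (b) if A + C > 0: (i) when −2(A+C) < B ≤ 2(A+C), one has −ℰ < Z_L(ℰ) < ℰ if and only if ℰ > ℰ_{2L}; (ii) when B > 2(A+C), one has −ℰ < Z_L(ℰ) < ℰ if and only if ℰ_{2L} < ℰ < ℰ_{1L}. -/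
/-- Existence range of the loop family: for Δ < 0 and A + C ≠ 0, the condition
−ℰ < Z_L(ℰ) < ℰ is characterized by the thresholds ℰ_{1L} and ℰ_{2L}, with the
order of the bifurcations depending on the sign of A + C. -/
theorem loop_existence_thresholds (A B C Δ : ℝ) (hΔ : Δ < 0) (hAC : A + C ≠ 0) :
    let ZL : ℝ → ℝ := fun E => -(B * E + Δ) / (2 * (A + C))
    let E1L := Δ / (2 * (A + C) - B)
    let E2L := Δ / (-(2 * (A + C)) - B)
    (A + C < 0 →
      (2 * (A + C) < B ∧ B ≤ -(2 * (A + C)) →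
        ∀ E : ℝ, 0 < E → ((-E < ZL E ∧ ZL E < E) ↔ E1L < E))
      ∧ (-(2 * (A + C)) < B →
        ∀ E : ℝ, 0 < E → ((-E < ZL E ∧ ZL E < E) ↔ E1L < E ∧ E < E2L)))
    ∧ (0 < A + C →
      (-(2 * (A + C)) < B ∧ B ≤ 2 * (A + C) →
        ∀ E : ℝ, 0 < E → ((-E < ZL E ∧ ZL E < E) ↔ E2L < E))
      ∧ (2 * (A + C) < B →
        ∀ E : ℝ, 0 < E → ((-E < ZL E ∧ ZL E < E) ↔ E2L < E ∧ E < E1L))) := by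
  intro ZL E1L E2L
  constructor
  · intro hs
    have h2s : 2 * (A + C) < 0 := by linarith
    constructor
    · rintro ⟨hB1, hB2⟩ E hE
      have hd : 2 * (A + C) - B < 0 := by linarith
      simp only [ZL, E1L]
      rw [lt_div_iff_of_neg h2s, div_lt_iff_of_neg h2s, div_lt_iff_of_neg hd]
      constructor
      · rintro ⟨h1, h2⟩; linarith
      · intro h
        refine ⟨by linarith, ?_⟩
        nlinarith [mul_nonneg hE.le (by linarith : (0:ℝ) ≤ -(2*(A+C)) - B)]
    · intro hB E hE
      have hd : 2 * (A + C) - B < 0 := by linarith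
      have hd2 : -(2 * (A + C)) - B < 0 := by linarith
      simp only [ZL, E1L, E2L]
      rw [lt_div_iff_of_neg h2s, div_lt_iff_of_neg h2s, div_lt_iff_of_neg hd,
        lt_div_iff_of_neg hd2]
      constructor
      · rintro ⟨h1, h2⟩; exact ⟨by linarith, by linarith⟩
      · rintro ⟨h1, h2⟩; exact ⟨by linarith, by linarith⟩
  · intro hs
    have h2s : 0 < 2 * (A + C) := by linarith
    constructor
    · rintro ⟨hB1, hB2⟩ E hE
      have hd2 : -(2 * (A + C)) - B < 0 := by linarith
      simp only [ZL, E2L]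
      rw [lt_div_iff₀ h2s, div_lt_iff₀ h2s, div_lt_iff_of_neg hd2]
      constructor
      · rintro ⟨h1, h2⟩; linarith
      · intro h
        refine ⟨?_, by linarith⟩
        nlinarith [mul_nonneg hE.le (by linarith : (0:ℝ) ≤ 2*(A+C) - B)]
    · intro hB E hE
      have hd : 2 * (A + C) - B < 0 := by linarith
      have hd2 : -(2 * (A + C)) - B < 0 := by linarith
      simp only [ZL, E1L, E2L]
      rw [lt_div_iff₀ h2s, div_lt_iff₀ h2s, div_lt_iff_of_neg hd2,
        lt_div_iff_of_neg hd]
      constructor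
      · rintro ⟨h1, h2⟩; exact ⟨by linarith, by linarith⟩
      · rintro ⟨h1, h2⟩; exact ⟨by linarith, by linarith⟩
end

section
/- Let A, B, C, Δ be real with C > 0 and A < C, let ℰ > 0, and let 𝓛_ℰ = {(X, Y, Z) ∈ ℝ³ : X² + Y² = (ℰ² − Z²)² and |Z| ≤ ℰ} be the lemon space, with ℋ(X, Y, Z) = C·X + (Bℰ+Δ)·Z + A·Z². Set Z_U = (Bℰ+Δ)/(2·(C−A)) and h_U = C·ℰ² + (Bℰ+Δ)²/(4·(C−A)). Then ℋ(p) ≤ h_U for every p ∈ 𝓛_ℰ; moreover the value h_U is attained on 𝓛_ℰ if and only if −ℰ ≤ Z_U ≤ ℰ, in which case it is attained at the point (ℰ² − Z_U², 0, Z_U). -/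
/-- In the reference-type case C > 0, A < C, the reduced Hamiltonian is bounded above
on the lemon by h_U; the bound is attained iff −ℰ ≤ Z_U ≤ ℰ, in which case it is
attained at the inclined point (ℰ² − Z_U², 0, Z_U). -/
theorem hamiltonian_max_on_lemon (A B C Δ : ℝ) (hC : 0 < C) (hAC : A < C)
    (E : ℝ) (hE : 0 < E) :
    let L : Set (ℝ × ℝ × ℝ) :=
      {p | p.1 ^ 2 + p.2.1 ^ 2 = (E ^ 2 - p.2.2 ^ 2) ^ 2 ∧ |p.2.2| ≤ E}
    let H : ℝ × ℝ × ℝ → ℝ :=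
      fun p => C * p.1 + (B * E + Δ) * p.2.2 + A * p.2.2 ^ 2
    let ZU := (B * E + Δ) / (2 * (C - A))
    let hU := C * E ^ 2 + (B * E + Δ) ^ 2 / (4 * (C - A))
    (∀ p ∈ L, H p ≤ hU)
    ∧ ((∃ p ∈ L, H p = hU) ↔ (-E ≤ ZU ∧ ZU ≤ E))
    ∧ (-E ≤ ZU → ZU ≤ E →
        (E ^ 2 - ZU ^ 2, 0, ZU) ∈ L ∧ H (E ^ 2 - ZU ^ 2, 0, ZU) = hU) := by
  intro L H ZU hU
  have hd : 0 < C - A := by linarith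
  have hd' : C - A ≠ 0 := ne_of_gt hd
  have key : ∀ Z : ℝ,
      C * (E ^ 2 - Z ^ 2) + (B * E + Δ) * Z + A * Z ^ 2
        = hU - (C - A) * (Z - ZU) ^ 2 := by
    intro Z
    simp only [hU, ZU]
    field_simp
    ring
  have bound : ∀ p ∈ L, H p ≤ hU := by
    rintro ⟨X, Y, Z⟩ ⟨h1, h2⟩
    have habs := abs_le.mp h2
    have hZ2 : Z ^ 2 ≤ E ^ 2 := by nlinarith [habs.1, habs.2]
    have hX : X ≤ E ^ 2 - Z ^ 2 := by
      nlinarith [sq_nonneg Y, sq_nonneg (X - (E ^ 2 - Z ^ 2))]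
    have hk := key Z
    simp only [H]
    nlinarith [sq_nonneg (Z - ZU), mul_nonneg hd.le (sq_nonneg (Z - ZU))]
  have hpt : -E ≤ ZU → ZU ≤ E →
      (E ^ 2 - ZU ^ 2, 0, ZU) ∈ L ∧ H (E ^ 2 - ZU ^ 2, 0, ZU) = hU := by
    intro h1 h2
    have hZ2 : ZU ^ 2 ≤ E ^ 2 := by nlinarith
    constructor
    · exact ⟨by ring, abs_le.mpr ⟨h1, h2⟩⟩
    · have hk := key ZU
      simp only [H]
      simpa using hk
  refine ⟨bound, ⟨?_, fun h => ⟨_, (hpt h.1 h.2).1, (hpt h.1 h.2).2⟩⟩, hpt⟩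
  rintro ⟨⟨X, Y, Z⟩, ⟨h1, h2⟩, heq⟩
  have habs := abs_le.mp h2
  have hZ2 : Z ^ 2 ≤ E ^ 2 := by nlinarith [habs.1, habs.2]
  have hX : X ≤ E ^ 2 - Z ^ 2 := by
    nlinarith [sq_nonneg Y, sq_nonneg (X - (E ^ 2 - Z ^ 2))]
  have hk := key Z
  simp only [H] at heq
  have hZZU : Z = ZU := by
    have hsq : (C - A) * (Z - ZU) ^ 2 ≤ 0 := by nlinarith
    have h0 : (Z - ZU) ^ 2 = 0 := le_antisymm (by nlinarith [sq_nonneg (Z - ZU)]) (sq_nonneg _)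
    have := pow_eq_zero_iff two_ne_zero |>.mp h0
    linarith
  constructor <;> [exact hZZU ▸ habs.1; exact hZZU ▸ habs.2]
end

section
/- Let A, B, C, Δ be real with C > 0 and A + C ≤ 0, let ℰ > 0, and let 𝓛_ℰ = {(X, Y, Z) ∈ ℝ³ : X² + Y² = (ℰ² − Z²)² and |Z| ≤ ℰ}, with ℋ(X, Y, Z) = C·X + (Bℰ+Δ)·Z + A·Z². Set h1 = ℰ·((A − B)·ℰ − Δ) and h2 = ℰ·((A + B)·ℰ + Δ). Then ℋ(p) ≥ min(h1, h2) for every p ∈ 𝓛_ℰ, and the minimum is attained at one of the normal-mode points (0, 0, −ℰ) (where ℋ = h1) or (0, 0, ℰ) (where ℋ = h2). -/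
/-- For C > 0 and A + C ≤ 0, the reduced Hamiltonian on the lemon is bounded below by
min(h1, h2), and the minimum is attained at one of the normal-mode points
(0,0,−ℰ) (where ℋ = h1) or (0,0,ℰ) (where ℋ = h2). -/
theorem hamiltonian_min_at_normal_modes (A B C Δ : ℝ) (hC : 0 < C) (hAC : A + C ≤ 0)
    (E : ℝ) (hE : 0 < E) :
    let L : Set (ℝ × ℝ × ℝ) :=
      {p | p.1 ^ 2 + p.2.1 ^ 2 = (E ^ 2 - p.2.2 ^ 2) ^ 2 ∧ |p.2.2| ≤ E}
    let H : ℝ × ℝ × ℝ → ℝ :=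
      fun p => C * p.1 + (B * E + Δ) * p.2.2 + A * p.2.2 ^ 2
    let h1 := E * ((A - B) * E - Δ)
    let h2 := E * ((A + B) * E + Δ)
    (∀ p ∈ L, min h1 h2 ≤ H p)
    ∧ ((0, 0, -E) : ℝ × ℝ × ℝ) ∈ L ∧ ((0, 0, E) : ℝ × ℝ × ℝ) ∈ L
    ∧ H (0, 0, -E) = h1 ∧ H (0, 0, E) = h2
    ∧ (∃ p ∈ L, H p = min h1 h2 ∧ (p = ((0, 0, -E) : ℝ × ℝ × ℝ) ∨ p = (0, 0, E))) := by
  intro L H h1 h2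
  have hmemL : ∀ s : ℝ, s = E ∨ s = -E → ((0, 0, s) : ℝ × ℝ × ℝ) ∈ L := by
    rintro s (rfl | rfl)
    · exact ⟨by simp, by rw [abs_of_pos hE]⟩
    · exact ⟨by simp, by rw [abs_neg, abs_of_pos hE]⟩
  have habs : ∀ s : ℝ, |s| ≤ E → s ^ 2 ≤ E ^ 2 := by
    intro s hs
    nlinarith [abs_nonneg s, sq_abs s, abs_le.mp hs]
  have key : ∀ p ∈ L, min h1 h2 ≤ H p := by
    rintro ⟨X, Y, Z⟩ ⟨hsph, hZ⟩
    simp only [Set.mem_setOf_eq] at hsph hZ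
    have hZE := abs_le.mp hZ
    have hZ2 : Z ^ 2 ≤ E ^ 2 := habs Z hZ
    have hXlb : -(E ^ 2 - Z ^ 2) ≤ X := by
      nlinarith [sq_nonneg Y, sq_nonneg (X + (E ^ 2 - Z ^ 2))]
    have step1 : A * E ^ 2 + (B * E + Δ) * Z ≤ H (X, Y, Z) := by
      simp only [H]
      nlinarith [mul_nonneg (neg_nonneg.mpr hAC) (sub_nonneg.mpr hZ2)]
    refine le_trans ?_ step1
    rcases le_or_gt 0 (B * E + Δ) with h | h
    · refine le_trans (min_le_left h1 h2) ?_
      simp only [h1]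
      nlinarith [mul_nonneg h (by linarith : 0 ≤ Z + E)]
    · refine le_trans (min_le_right h1 h2) ?_
      simp only [h2]
      nlinarith [mul_nonneg (by linarith : (0:ℝ) ≤ -(B * E + Δ)) (by linarith : (0:ℝ) ≤ E - Z)]
  have hm1 : ((0, 0, -E) : ℝ × ℝ × ℝ) ∈ L := hmemL (-E) (Or.inr rfl)
  have hm2 : ((0, 0, E) : ℝ × ℝ × ℝ) ∈ L := hmemL E (Or.inl rfl)
  have hH1 : H (0, 0, -E) = h1 := by simp only [H, h1]; ring
  have hH2 : H (0, 0, E) = h2 := by simp only [H, h2]; ring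
  refine ⟨key, hm1, hm2, hH1, hH2, ?_⟩
  rcases le_total h1 h2 with h | h
  · exact ⟨(0, 0, -E), hm1, by rw [hH1, min_eq_left h], Or.inl rfl⟩
  · exact ⟨(0, 0, E), hm2, by rw [hH2, min_eq_right h], Or.inr rfl⟩
end

section
/- Let A, B, C, Δ be real with C > 0 and A + C > 0, let ℰ > 0, and suppose Z_L = −(Bℰ+Δ)/(2·(A+C)) satisfies −ℰ ≤ Z_L ≤ ℰ. Let 𝓛_ℰ = {(X, Y, Z) ∈ ℝ³ : X² + Y² = (ℰ² − Z²)² and |Z| ≤ ℰ} and ℋ(X, Y, Z) = C·X + (Bℰ+Δ)·Z + A·Z², and set h_L = −C·ℰ² − (Bℰ+Δ)²/(4·(A+C)). Then ℋ(p) ≥ h_L for every p ∈ 𝓛_ℰ, with equality attained at the loop point (−(ℰ² − Z_L²), 0, Z_L). -/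
/-- For C > 0, A + C > 0 and −ℰ ≤ Z_L ≤ ℰ, the reduced Hamiltonian on the lemon is
bounded below by h_L, with equality attained at the loop point (−(ℰ²−Z_L²), 0, Z_L). -/
theorem hamiltonian_min_at_loop (A B C Δ : ℝ) (hC : 0 < C) (hAC : 0 < A + C)
    (E : ℝ) (hE : 0 < E)
    (hZL1 : -E ≤ -(B * E + Δ) / (2 * (A + C)))
    (hZL2 : -(B * E + Δ) / (2 * (A + C)) ≤ E) :
    let ZL := -(B * E + Δ) / (2 * (A + C))
    let L : Set (ℝ × ℝ × ℝ) :=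
      {p | p.1 ^ 2 + p.2.1 ^ 2 = (E ^ 2 - p.2.2 ^ 2) ^ 2 ∧ |p.2.2| ≤ E}
    let H : ℝ × ℝ × ℝ → ℝ :=
      fun p => C * p.1 + (B * E + Δ) * p.2.2 + A * p.2.2 ^ 2
    let hL := -(C * E ^ 2) - (B * E + Δ) ^ 2 / (4 * (A + C))
    (∀ p ∈ L, hL ≤ H p)
    ∧ (-(E ^ 2 - ZL ^ 2), 0, ZL) ∈ L
    ∧ H (-(E ^ 2 - ZL ^ 2), 0, ZL) = hL := by
  intro ZL L H hL
  have hs : (0:ℝ) < A + C := hAC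
  have hZLdef : ZL * (2 * (A + C)) = -(B * E + Δ) := by
    simp only [ZL]
    field_simp
  have hdiv : (B * E + Δ) ^ 2 / (4 * (A + C)) * (4 * (A + C)) = (B * E + Δ) ^ 2 := by
    field_simp
  have hZLabs : |ZL| ≤ E := abs_le.mpr ⟨hZL1, hZL2⟩
  have hZLsq : ZL ^ 2 ≤ E ^ 2 := by
    have := sq_abs ZL ▸ pow_le_pow_left₀ (abs_nonneg ZL) hZLabs 2
    simpa [sq_abs] using this
  refine ⟨?_, ⟨?_, hZLabs⟩, ?_⟩
  · rintro ⟨X, Y, Z⟩ ⟨h1, h2⟩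
    have hZsq : Z ^ 2 ≤ E ^ 2 := by
      have := pow_le_pow_left₀ (abs_nonneg Z) h2 2
      simpa [sq_abs] using this
    have hXlb : -(E ^ 2 - Z ^ 2) ≤ X := by
      nlinarith [sq_nonneg Y, sq_nonneg (X + (E ^ 2 - Z ^ 2))]
    have hsq : 0 ≤ (A + C) * (Z - ZL) ^ 2 := by positivity
    simp only [H, hL]
    have key : C * X + (B * E + Δ) * Z + A * Z ^ 2
        - (-(C * E ^ 2) - (B * E + Δ) ^ 2 / (4 * (A + C)))
        = C * (X + (E ^ 2 - Z ^ 2)) + (A + C) * (Z - ZL) ^ 2 := by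
      simp only [ZL]
      field_simp
      ring
    have h3 : 0 ≤ C * (X + (E ^ 2 - Z ^ 2)) := by nlinarith
    linarith
  · exact by ring
  · simp only [H, hL, ZL]
    field_simp
    ring
end

section
/- Let A, B, C, Δ be real with C > 0, A < C and A + C ≤ 0, let ℰ > 0, and suppose Z_U = (Bℰ+Δ)/(2·(C−A)) satisfies −ℰ ≤ Z_U ≤ ℰ. Then the image of the lemon 𝓛_ℰ = {(X, Y, Z) ∈ ℝ³ : X² + Y² = (ℰ² − Z²)², |Z| ≤ ℰ} under the reduced Hamiltonian ℋ(X, Y, Z) = C·X + (Bℰ+Δ)·Z + A·Z² is exactly the closed interval [min(h1, h2), h_U], where h1 = ℰ·((A−B)ℰ − Δ), h2 = ℰ·((A+B)ℰ + Δ), and h_U = C·ℰ² + (Bℰ+Δ)²/(4·(C−A)). (This interval is the fibre of the energy-momentum map over ℰ in the reference case after the first bifurcation.) -/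
set_option maxHeartbeats 1000000


/-- In the reference case (C > 0, A < C, A + C ≤ 0) after the first bifurcation
(−ℰ ≤ Z_U ≤ ℰ), the image of the lemon under the reduced Hamiltonian is exactly the
closed interval [min(h1, h2), h_U]: the fibre of the energy-momentum map over ℰ. -/
theorem energy_momentum_fibre (A B C Δ : ℝ) (hC : 0 < C) (hAC : A < C)
    (hACsum : A + C ≤ 0) (E : ℝ) (hE : 0 < E)
    (hZU1 : -E ≤ (B * E + Δ) / (2 * (C - A)))
    (hZU2 : (B * E + Δ) / (2 * (C - A)) ≤ E) :
    let L : Set (ℝ × ℝ × ℝ) :=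
      {p | p.1 ^ 2 + p.2.1 ^ 2 = (E ^ 2 - p.2.2 ^ 2) ^ 2 ∧ |p.2.2| ≤ E}
    let H : ℝ × ℝ × ℝ → ℝ :=
      fun p => C * p.1 + (B * E + Δ) * p.2.2 + A * p.2.2 ^ 2
    let h1 := E * ((A - B) * E - Δ)
    let h2 := E * ((A + B) * E + Δ)
    let hU := C * E ^ 2 + (B * E + Δ) ^ 2 / (4 * (C - A))
    H '' L = Set.Icc (min h1 h2) hU := by
  intro L H h1 h2 hU
  have hCA : (0:ℝ) < C - A := by linarith
  have hCAne : C - A ≠ 0 := ne_of_gt hCA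
  set b : ℝ := B * E + Δ with hb
  set ZU : ℝ := b / (2 * (C - A)) with hZUdef
  have hD : 4 * (C - A) * (b ^ 2 / (4 * (C - A))) = b ^ 2 := by
    field_simp
  -- the boundary function f(Z) (Y = 0, X = E² − Z²)
  set f : ℝ → ℝ := fun Z => C * (E ^ 2 - Z ^ 2) + b * Z + A * Z ^ 2 with hf
  have hfc : Continuous f := by fun_prop
  have hfZU : f ZU = hU := by
    show C * (E ^ 2 - (b / (2 * (C - A))) ^ 2) + b * (b / (2 * (C - A)))
        + A * (b / (2 * (C - A))) ^ 2 = C * E ^ 2 + b ^ 2 / (4 * (C - A))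
    field_simp
    ring
  have hh1 : h1 = A * E ^ 2 - b * E := by simp only [h1, hb]; ring
  have hh2 : h2 = A * E ^ 2 + b * E := by simp only [h2, hb]; ring
  ext h
  constructor
  · rintro ⟨⟨X, Y, Z⟩, ⟨hXY, hZ⟩, rfl⟩
    obtain ⟨hZ1, hZ2⟩ := abs_le.mp hZ
    have hr : (0:ℝ) ≤ E ^ 2 - Z ^ 2 := by nlinarith
    have hXle : X ≤ E ^ 2 - Z ^ 2 := by nlinarith [sq_nonneg Y]
    have hXge : -(E ^ 2 - Z ^ 2) ≤ X := by nlinarith [sq_nonneg Y]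
    simp only [Set.mem_Icc, H]
    constructor
    · have hCX : C * (-(E ^ 2 - Z ^ 2)) ≤ C * X := mul_le_mul_of_nonneg_left hXge hC.le
      have hAC2 : (0:ℝ) ≤ (-(A + C)) * (E ^ 2 - Z ^ 2) :=
        mul_nonneg (by linarith) hr
      rcases le_total 0 b with hbpos | hbneg
      · have hbZ : (0:ℝ) ≤ b * (Z + E) := mul_nonneg hbpos (by linarith)
        have : h1 ≤ C * X + b * Z + A * Z ^ 2 := by rw [hh1]; nlinarith
        exact le_trans (min_le_left h1 h2) this
      · have hbZ : (0:ℝ) ≤ (-b) * (E - Z) := mul_nonneg (by linarith) (by linarith)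
        have : h2 ≤ C * X + b * Z + A * Z ^ 2 := by rw [hh2]; nlinarith
        exact le_trans (min_le_right h1 h2) this
    · show C * X + b * Z + A * Z ^ 2 ≤ C * E ^ 2 + b ^ 2 / (4 * (C - A))
      have hCX : C * X ≤ C * (E ^ 2 - Z ^ 2) := mul_le_mul_of_nonneg_left hXle hC.le
      have keq : (C - A) * Z ^ 2 - b * Z + b ^ 2 / (4 * (C - A))
          = (2 * (C - A) * Z - b) ^ 2 / (4 * (C - A)) := by
        field_simp; ring
      have key : 0 ≤ (C - A) * Z ^ 2 - b * Z + b ^ 2 / (4 * (C - A)) := by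
        rw [keq]; exact div_nonneg (sq_nonneg _) (by linarith)
      linarith
  · intro hh
    obtain ⟨hhl, hhr⟩ := Set.mem_Icc.mp hh
    rcases le_total 0 b with hbpos | hbneg
    · -- min = h1, use IVT on [-E, ZU]
      have hmin : min h1 h2 = h1 := min_eq_left (by rw [hh1, hh2]; nlinarith)
      have hfE : f (-E) = h1 := by rw [hh1]; simp only [f]; ring
      have : h ∈ Set.Icc (f (-E)) (f ZU) := by
        rw [hfE, hfZU]; exact ⟨by rwa [hmin] at hhl, hhr⟩
      obtain ⟨Z, hZmem, hfZ⟩ := intermediate_value_Icc hZU1 hfc.continuousOn this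
      refine ⟨(E ^ 2 - Z ^ 2, 0, Z), ⟨by simp [L], ?_⟩, hfZ⟩
      exact abs_le.mpr ⟨hZmem.1, le_trans hZmem.2 hZU2⟩
    · -- min = h2, use IVT on [ZU, E]
      have hmin : min h1 h2 = h2 := min_eq_right (by rw [hh1, hh2]; nlinarith)
      have hfE : f E = h2 := by rw [hh2]; simp only [f]; ring
      have : h ∈ Set.Icc (f E) (f ZU) := by
        rw [hfE, hfZU]; exact ⟨by rwa [hmin] at hhl, hhr⟩
      obtain ⟨Z, hZmem, hfZ⟩ := intermediate_value_Icc' hZU2 hfc.continuousOn this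
      refine ⟨(E ^ 2 - Z ^ 2, 0, Z), ⟨by simp [L], ?_⟩, hfZ⟩
      exact abs_le.mpr ⟨le_trans hZU1 hZmem.1, hZmem.2⟩
end

section
/- Let A, B, C, Δ, ℰ be real with A ≠ C, and set Z_U = (Bℰ+Δ)/(2·(C−A)). Then the square of the reduced (normal) frequency of the inclined family satisfies the identity (8C/(C−A))·((2(A−C) − B)·ℰ − Δ)·(Δ + (2(A−C) + B)·ℰ) = 32·C·(C−A)·(ℰ² − Z_U²). Consequently, if C·(C−A) > 0 and ℰ > 0, this quantity is strictly positive if and only if −ℰ < Z_U < ℰ; in particular, in the reference case C > 0 > A the inclined periodic orbits have real nonzero normal frequency (and are stable) throughout their existence range. -/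
/-- The square of the reduced (normal) frequency of the inclined family equals
32 C (C−A)(ℰ² − Z_U²); hence if C(C−A) > 0 and ℰ > 0 it is positive iff
−ℰ < Z_U < ℰ; in particular in the reference case C > 0 > A the inclined orbits
have real nonzero normal frequency throughout their existence range. -/
theorem inclined_normal_frequency (A B C Δ E : ℝ) (hAC : A ≠ C) :
    let ZU := (B * E + Δ) / (2 * (C - A))
    let ω2sq := (8 * C / (C - A)) * ((2 * (A - C) - B) * E - Δ)
                  * (Δ + (2 * (A - C) + B) * E)
    ω2sq = 32 * C * (C - A) * (E ^ 2 - ZU ^ 2)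
    ∧ (0 < C * (C - A) → 0 < E → (0 < ω2sq ↔ (-E < ZU ∧ ZU < E)))
    ∧ (0 < C → A < 0 → 0 < E → -E < ZU → ZU < E → 0 < ω2sq) := by
  intro ZU ω2sq
  have hd : C - A ≠ 0 := sub_ne_zero.mpr (Ne.symm hAC)
  have key : ω2sq = 32 * C * (C - A) * (E ^ 2 - ZU ^ 2) := by
    show (8 * C / (C - A)) * ((2 * (A - C) - B) * E - Δ) * (Δ + (2 * (A - C) + B) * E)
      = 32 * C * (C - A) * (E ^ 2 - ((B * E + Δ) / (2 * (C - A))) ^ 2)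
    field_simp
    ring
  have hiff : ∀ _ : 0 < C * (C - A), 0 < E → (0 < ω2sq ↔ (-E < ZU ∧ ZU < E)) := by
    intro h hE
    rw [key]
    constructor
    · intro hpos
      have h2 : 0 < E ^ 2 - ZU ^ 2 := by
        by_contra hle
        push_neg at hle
        nlinarith
      have h3 : ZU ^ 2 < E ^ 2 := by nlinarith
      constructor <;> nlinarith [sq_nonneg (ZU + E), sq_nonneg (ZU - E)]
    · rintro ⟨h1, h2⟩
      have : ZU ^ 2 < E ^ 2 := by nlinarith
      nlinarith
  refine ⟨key, hiff, ?_⟩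
  intro hC hA hE h1 h2
  exact (hiff (by nlinarith) hE).mpr ⟨h1, h2⟩
end
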